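/- arXiv:1302.3310 — 2 statements merged into one kernel-verified Lean document; each statement's English description precedes it below -/
import Mathlib

section
/- Let A_1, ..., A_N be bounded operators on a Hilbert space H. Then the operator norm of the sum A_1 A_1* + ... + A_N A_N* is at most N times the operator norm of A_1* A_1 + ... + A_N* A_N. -/
open scoped InnerProductSpace

open ContinuousLinearMap in
/-- For bounded operators `A 1, ..., A N` on a Hilbert space,
`‖∑ Aᵢ Aᵢ*‖ ≤ N * ‖∑ Aᵢ* Aᵢ‖`. -/
theorem stmt0 {H : Type*} [NormedAddCommGroup H] [InnerProductSpace ℂ H] [CompleteSpace H]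
    (N : ℕ) (A : Fin N → (H →L[ℂ] H)) :
    ‖∑ i, A i ∘L adjoint (A i)‖ ≤ (N : ℝ) * ‖∑ i, adjoint (A i) ∘L A i‖ := by
  set S : H →L[ℂ] H := ∑ i, adjoint (A i) ∘L A i with hS
  have hSnn : (0:ℝ) ≤ ‖S‖ := norm_nonneg S
  have key : ∀ i, ‖A i‖ * ‖A i‖ ≤ ‖S‖ := by
    intro i
    have hx : ∀ x : H, ‖A i x‖ ^ 2 ≤ ‖S‖ * ‖x‖ ^ 2 := by
      intro x
      have h1 : ‖A i x‖ ^ 2 ≤ RCLike.re ⟪S x, x⟫_ℂ := by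
        have heq : RCLike.re ⟪S x, x⟫_ℂ = ∑ j, ‖A j x‖ ^ 2 := by
          rw [hS]
          simp only [ContinuousLinearMap.sum_apply, sum_inner, map_sum,
            ContinuousLinearMap.comp_apply, ContinuousLinearMap.adjoint_inner_left]
          exact Finset.sum_congr rfl fun j _ => inner_self_eq_norm_sq _
        rw [heq]
        exact Finset.single_le_sum (fun j _ => sq_nonneg (‖A j x‖)) (Finset.mem_univ i)
      have h2 : RCLike.re ⟪S x, x⟫_ℂ ≤ ‖S‖ * ‖x‖ ^ 2 := by
        calc RCLike.re ⟪S x, x⟫_ℂ ≤ ‖S x‖ * ‖x‖ := re_inner_le_norm _ _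
          _ ≤ (‖S‖ * ‖x‖) * ‖x‖ :=
            mul_le_mul_of_nonneg_right (le_opNorm _ _) (norm_nonneg _)
          _ = ‖S‖ * ‖x‖ ^ 2 := by ring
      linarith
    have hle : ‖A i‖ ≤ Real.sqrt ‖S‖ := by
      refine ContinuousLinearMap.opNorm_le_bound _ (Real.sqrt_nonneg _) fun x => ?_
      have := hx x
      have h3 : ‖A i x‖ ≤ Real.sqrt (‖S‖ * ‖x‖ ^ 2) := by
        rw [← Real.sqrt_sq (norm_nonneg (A i x))]
        exact Real.sqrt_le_sqrt this
      rwa [Real.sqrt_mul hSnn, Real.sqrt_sq (norm_nonneg x)] at h3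
    calc ‖A i‖ * ‖A i‖ ≤ Real.sqrt ‖S‖ * Real.sqrt ‖S‖ :=
          mul_le_mul hle hle (norm_nonneg _) (Real.sqrt_nonneg _)
      _ = ‖S‖ := Real.mul_self_sqrt hSnn
  calc ‖∑ i, A i ∘L adjoint (A i)‖ ≤ ∑ i, ‖A i ∘L adjoint (A i)‖ := norm_sum_le _ _
    _ ≤ ∑ _i : Fin N, ‖S‖ := by
        refine Finset.sum_le_sum fun i _ => ?_
        have : A i ∘L adjoint (A i) = adjoint (adjoint (A i)) ∘L adjoint (A i) := by
          rw [adjoint_adjoint]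
        rw [this, norm_adjoint_comp_self, LinearIsometryEquiv.norm_map]
        exact key i
    _ = (N : ℝ) * ‖S‖ := by simp [Finset.sum_const, nsmul_eq_mul]
end

section
/- Let U ⊆ ℝ^N be open and let f : U → L(H, G) be *-strongly differentiable, i.e. both x ↦ f(x)ξ (ξ ∈ H) and x ↦ f(x)*η (η ∈ G) are continuously differentiable. Let A_i := ∂_i f(x) denote the strong partial derivatives at a point x ∈ U. Then the derivative of the adjoint map f* at x satisfies ‖d(f*)(x)‖ ≤ √N · ‖df(x)‖, where ‖df(x)‖ = ‖Σ_{i=1}^N A_i* A_i‖^{1/2} and ‖d(f*)(x)‖ = ‖Σ_{i=1}^N A_i A_i*‖^{1/2}. -/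
open scoped InnerProductSpace

open ContinuousLinearMap in
theorem aux_norm_sq_le {H G : Type*} [NormedAddCommGroup H] [InnerProductSpace ℂ H]
    [CompleteSpace H] [NormedAddCommGroup G] [InnerProductSpace ℂ G] [CompleteSpace G]
    {N : ℕ} (A : Fin N → (H →L[ℂ] G)) (i : Fin N) :
    ‖A i‖ ^ 2 ≤ ‖∑ j, adjoint (A j) ∘L A j‖ := by
  set S := ∑ j, adjoint (A j) ∘L A j with hS
  have key : ∀ ξ : H, ‖A i ξ‖ ^ 2 ≤ ‖S‖ * ‖ξ‖ ^ 2 := by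
    intro ξ
    have h1 : ∀ j, ‖A j ξ‖ ^ 2 = RCLike.re (⟪(adjoint (A j) ∘L A j) ξ, ξ⟫_ℂ) := by
      intro j
      simp only [ContinuousLinearMap.comp_apply, ContinuousLinearMap.adjoint_inner_left]
      rw [← inner_self_eq_norm_sq (𝕜 := ℂ)]
    have h2 : ‖A i ξ‖ ^ 2 ≤ ∑ j, RCLike.re (⟪(adjoint (A j) ∘L A j) ξ, ξ⟫_ℂ) := by
      rw [h1 i]
      refine Finset.single_le_sum (f := fun j => RCLike.re (⟪(adjoint (A j) ∘L A j) ξ, ξ⟫_ℂ))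
        (fun j _ => by show 0 ≤ RCLike.re (⟪(adjoint (A j) ∘L A j) ξ, ξ⟫_ℂ); rw [← h1 j]; positivity) (Finset.mem_univ i)
    have h3 : ∑ j, RCLike.re (⟪(adjoint (A j) ∘L A j) ξ, ξ⟫_ℂ) = RCLike.re (⟪S ξ, ξ⟫_ℂ) := by
      rw [hS]
      simp [ContinuousLinearMap.sum_apply, sum_inner, map_sum]
    have h4 : RCLike.re (⟪S ξ, ξ⟫_ℂ) ≤ ‖S‖ * ‖ξ‖ ^ 2 := by
      calc RCLike.re (⟪S ξ, ξ⟫_ℂ) ≤ ‖⟪S ξ, ξ⟫_ℂ‖ := RCLike.re_le_norm _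
        _ ≤ ‖S ξ‖ * ‖ξ‖ := norm_inner_le_norm _ _
        _ ≤ (‖S‖ * ‖ξ‖) * ‖ξ‖ := mul_le_mul_of_nonneg_right (S.le_opNorm ξ) (norm_nonneg ξ)
        _ = ‖S‖ * ‖ξ‖ ^ 2 := by ring
    linarith [h2, h3.le, h4]
  have hSnn : (0:ℝ) ≤ ‖S‖ := norm_nonneg _
  have hle : ‖A i‖ ≤ Real.sqrt ‖S‖ := by
    apply ContinuousLinearMap.opNorm_le_bound _ (Real.sqrt_nonneg _)
    intro ξ
    have : ‖A i ξ‖ = Real.sqrt (‖A i ξ‖ ^ 2) := (Real.sqrt_sq (norm_nonneg _)).symm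
    rw [this]
    calc Real.sqrt (‖A i ξ‖ ^ 2) ≤ Real.sqrt (‖S‖ * ‖ξ‖ ^ 2) := Real.sqrt_le_sqrt (key ξ)
      _ = Real.sqrt ‖S‖ * ‖ξ‖ := by
          rw [Real.sqrt_mul hSnn, Real.sqrt_sq (norm_nonneg ξ)]
  calc ‖A i‖ ^ 2 ≤ Real.sqrt ‖S‖ ^ 2 := pow_le_pow_left₀ (norm_nonneg _) hle 2
    _ = ‖S‖ := Real.sq_sqrt hSnn

open ContinuousLinearMap in
/-- Let `f : U → L(H,G)` be *-strongly differentiable at `x ∈ U ⊆ ℝ^N` with strong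
partial derivatives `A i = ∂ᵢ f(x)` (so that `(A i)* = ∂ᵢ (f*)(x)`). Then
`‖d(f*)(x)‖ ≤ √N ‖df(x)‖`, where `‖df(x)‖ = ‖∑ (A i)* (A i)‖^(1/2)` and
`‖d(f*)(x)‖ = ‖∑ (A i) (A i)*‖^(1/2)`. -/
theorem stmt7 {H G : Type*} [NormedAddCommGroup H] [InnerProductSpace ℂ H] [CompleteSpace H]
    [NormedAddCommGroup G] [InnerProductSpace ℂ G] [CompleteSpace G]
    {N : ℕ} (U : Set (EuclideanSpace ℝ (Fin N))) (hU : IsOpen U)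
    (f : EuclideanSpace ℝ (Fin N) → (H →L[ℂ] G))
    (x : EuclideanSpace ℝ (Fin N)) (hx : x ∈ U)
    (A : Fin N → (H →L[ℂ] G))
    (hA : ∀ (ξ : H) (i : Fin N),
      HasDerivAt (fun t : ℝ => f (x + t • EuclideanSpace.single i (1 : ℝ)) ξ) (A i ξ) 0)
    (hAadj : ∀ (η : G) (i : Fin N),
      HasDerivAt (fun t : ℝ => adjoint (f (x + t • EuclideanSpace.single i (1 : ℝ))) η)
        (adjoint (A i) η) 0) :
    Real.sqrt ‖∑ i, A i ∘L adjoint (A i)‖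
      ≤ Real.sqrt N * Real.sqrt ‖∑ i, adjoint (A i) ∘L A i‖ := by
  rw [← Real.sqrt_mul (Nat.cast_nonneg N)]
  apply Real.sqrt_le_sqrt
  calc ‖∑ i, A i ∘L adjoint (A i)‖ ≤ ∑ i, ‖A i ∘L adjoint (A i)‖ := norm_sum_le _ _
    _ = ∑ i, ‖A i‖ ^ 2 := by
        refine Finset.sum_congr rfl fun i _ => ?_
        have := ContinuousLinearMap.norm_adjoint_comp_self (adjoint (A i))
        rw [ContinuousLinearMap.adjoint_adjoint] at this
        have hn : ‖adjoint (A i)‖ = ‖A i‖ := adjoint.norm_map (A i)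
        rw [this, hn, sq]
    _ ≤ ∑ _i : Fin N, ‖∑ j, adjoint (A j) ∘L A j‖ :=
        Finset.sum_le_sum fun i _ => aux_norm_sq_le A i
    _ = N * ‖∑ j, adjoint (A j) ∘L A j‖ := by
        simp [Finset.sum_const, mul_comm]
end
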